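/- arXiv:math/0010059 — 3 statements merged into one kernel-verified Lean document; each statement's English description precedes it below -/
import Mathlib

section
/- Let N be a natural number, p, q : Fin N → ℂ, u(x) = ∑_{k=1}^{N} (p_k · exp(i k x) + q_k · exp(−i k x)), and let L be an integer. Then the family indexed by pairs of multi-indices (a, b) : (Fin N → ℕ) × (Fin N → ℕ), whose value is ∏_{k=1}^{N} p_k^{a_k}/(a_k!) · ∏_{k=1}^{N} q_k^{b_k}/(b_k!) if ∑_{k=1}^{N} k·a_k − ∑_{k=1}^{N} k·b_k = L and 0 otherwise, is summable, and its sum equals the L-th Fourier coefficient (1/(2π)) · ∫₀^{2π} exp(u(x)) · exp(−i L x) dx of exp ∘ u. -/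
open Complex MeasureTheory intervalIntegral

lemma hasSum_congr_fun {α M : Type*} [AddCommMonoid M] [TopologicalSpace M]
    {f g : α → M} {a : M} (h : HasSum f a) (e : ∀ i, f i = g i) : HasSum g a :=
  (funext e : f = g) ▸ h

/-- The trigonometric polynomial `u(x) = ∑_{k=1}^{N} (p_k e^{ikx} + q_k e^{-ikx})` with
coefficients `p q : Fin N → ℂ` (the index `k : Fin N` corresponding to the frequency
`k + 1 ∈ {1, …, N}`). -/
noncomputable def trigPoly (N : ℕ) (p q : Fin N → ℂ) : ℝ → ℂ := fun x =>
  ∑ k : Fin N,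
    (p k * Complex.exp (Complex.I * ((k.val : ℂ) + 1) * (x : ℂ)) +
      q k * Complex.exp (-(Complex.I * ((k.val : ℂ) + 1) * (x : ℂ))))

/-- The coefficient attached to a pair of multi-indices. -/
noncomputable def tpCoeff (N : ℕ) (p q : Fin N → ℂ) (ab : (Fin N → ℕ) × (Fin N → ℕ)) : ℂ :=
  (∏ k : Fin N, p k ^ ab.1 k / (Nat.factorial (ab.1 k) : ℂ)) *
    (∏ k : Fin N, q k ^ ab.2 k / (Nat.factorial (ab.2 k) : ℂ))

/-- The total frequency of a pair of multi-indices. -/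
def tpFreq (N : ℕ) (ab : (Fin N → ℕ) × (Fin N → ℕ)) : ℤ :=
  (∑ k : Fin N, ((k.val : ℤ) + 1) * (ab.1 k : ℤ)) -
    (∑ k : Fin N, ((k.val : ℤ) + 1) * (ab.2 k : ℤ))

/-- The summand family. -/
noncomputable def tpF (N : ℕ) (p q : Fin N → ℂ) (L : ℤ)
    (ab : (Fin N → ℕ) × (Fin N → ℕ)) (x : ℝ) : ℂ :=
  tpCoeff N p q ab * Complex.exp (Complex.I * ((tpFreq N ab - L : ℤ) : ℂ) * (x : ℂ))

/-- Product of `n` absolutely convergent series, indexed by multi-indices. -/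
lemma auxProd {n : ℕ} (f : Fin n → ℕ → ℂ) (S : Fin n → ℂ)
    (hnorm : ∀ k, Summable fun m => ‖f k m‖)
    (hsum : ∀ k, HasSum (f k) (S k)) :
    HasSum (fun a : Fin n → ℕ => ∏ k, f k (a k)) (∏ k, S k) ∧
      Summable (fun a : Fin n → ℕ => ‖∏ k, f k (a k)‖) := by
  induction n with
  | zero =>
      constructor
      · simpa using hasSum_fintype (fun a : Fin 0 → ℕ => ∏ k : Fin 0, f k (a k))
      · exact (hasSum_fintype _).summable
  | succ n ih =>
      obtain ⟨ih1, ih2⟩ := ih (fun k => f k.succ) (fun k => S k.succ)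
        (fun k => hnorm _) (fun k => hsum _)
      have h1 := summable_mul_of_summable_norm (hnorm 0) ih2
      have hmul := (hsum 0).mul ih1 h1
      have hns := (hnorm 0).mul_norm ih2
      let e : ℕ × (Fin n → ℕ) ≃ (Fin (n + 1) → ℕ) := Fin.consEquiv (fun _ => ℕ)
      have hfun : ((fun a : Fin (n + 1) → ℕ => ∏ k, f k (a k)) ∘ e) =
          fun x : ℕ × (Fin n → ℕ) => f 0 x.1 * ∏ k : Fin n, f k.succ (x.2 k) := by
        funext x
        simp [e, Fin.consEquiv, Fin.prod_univ_succ]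
      constructor
      · have := (e.hasSum_iff (f := fun a : Fin (n + 1) → ℕ => ∏ k, f k (a k))
          (a := S 0 * ∏ k : Fin n, S k.succ)).mp (by rw [hfun]; exact hmul)
        rwa [Fin.prod_univ_succ]
      · refine (e.summable_iff (f := fun a : Fin (n + 1) → ℕ => ‖∏ k, f k (a k)‖)).mp ?_
        refine hns.congr fun x => ?_
        exact congrArg norm (congrFun hfun x).symm

/-- Exponential of a finite sum as a sum over multi-indices. -/
lemma auxExpProd {n : ℕ} (A : Fin n → ℂ) :
    HasSum (fun a : Fin n → ℕ => ∏ k, A k ^ a k / (Nat.factorial (a k) : ℂ))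
        (Complex.exp (∑ k, A k)) ∧
      Summable (fun a : Fin n → ℕ => ‖∏ k, A k ^ a k / (Nat.factorial (a k) : ℂ)‖) := by
  have hnorm : ∀ k : Fin n, Summable fun m => ‖A k ^ m / (Nat.factorial m : ℂ)‖ := by
    intro k
    refine (Real.summable_pow_div_factorial ‖A k‖).congr fun m => ?_
    rw [norm_div, norm_pow]
    norm_num
  have hsum : ∀ k : Fin n, HasSum (fun m => A k ^ m / (Nat.factorial m : ℂ))
      (Complex.exp (A k)) := by
    intro k
    rw [Complex.exp_eq_exp_ℂ]
    exact NormedSpace.expSeries_div_hasSum_exp (A k)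
  have := auxProd (fun k m => A k ^ m / (Nat.factorial m : ℂ)) (fun k => Complex.exp (A k))
    hnorm hsum
  rwa [← Complex.exp_sum] at this

lemma prod_pow_exp {n : ℕ} (p : Fin n → ℂ) (c : Fin n → ℂ) (a : Fin n → ℕ) :
    ∏ k, (p k * Complex.exp (c k)) ^ a k / (Nat.factorial (a k) : ℂ)
      = (∏ k, p k ^ a k / (Nat.factorial (a k) : ℂ)) *
        Complex.exp (∑ k, (a k : ℂ) * c k) := by
  rw [Complex.exp_sum, ← Finset.prod_mul_distrib]
  refine Finset.prod_congr rfl fun k _ => ?_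
  rw [mul_pow, ← Complex.exp_nat_mul]
  ring

/-- The pointwise expansion of `exp(u(x)) e^{-iLx}` as a sum over pairs of multi-indices. -/
lemma tp_hasSum_pointwise (N : ℕ) (p q : Fin N → ℂ) (L : ℤ) (x : ℝ) :
    HasSum (fun ab : (Fin N → ℕ) × (Fin N → ℕ) => tpF N p q L ab x)
      (Complex.exp (trigPoly N p q x) * Complex.exp (-(Complex.I * (L : ℂ) * (x : ℂ)))) := by
  obtain ⟨hP, hPn⟩ := auxExpProd (fun k : Fin N =>
    p k * Complex.exp (Complex.I * ((k.val : ℂ) + 1) * (x : ℂ)))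
  obtain ⟨hQ, hQn⟩ := auxExpProd (fun k : Fin N =>
    q k * Complex.exp (-(Complex.I * ((k.val : ℂ) + 1) * (x : ℂ))))
  have hs := summable_mul_of_summable_norm hPn hQn
  have hmul0 := hP.mul hQ hs
  have hmul := hmul0.mul_right (Complex.exp (-(Complex.I * (L : ℂ) * (x : ℂ))))
  have htarget : Complex.exp (∑ k : Fin N,
        p k * Complex.exp (Complex.I * ((k.val : ℂ) + 1) * (x : ℂ))) *
      Complex.exp (∑ k : Fin N,
        q k * Complex.exp (-(Complex.I * ((k.val : ℂ) + 1) * (x : ℂ)))) *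
      Complex.exp (-(Complex.I * (L : ℂ) * (x : ℂ)))
      = Complex.exp (trigPoly N p q x) * Complex.exp (-(Complex.I * (L : ℂ) * (x : ℂ))) := by
    rw [← Complex.exp_add, trigPoly, Finset.sum_add_distrib]
  rw [htarget] at hmul
  refine hasSum_congr_fun hmul fun ab => ?_
  simp only [tpF, tpCoeff]
  rw [prod_pow_exp p (fun k : Fin N => Complex.I * ((k.val : ℂ) + 1) * (x : ℂ)) ab.1,
    prod_pow_exp q (fun k : Fin N => -(Complex.I * ((k.val : ℂ) + 1) * (x : ℂ))) ab.2]
  have harg : (∑ k : Fin N, (ab.1 k : ℂ) * (Complex.I * ((k.val : ℂ) + 1) * (x : ℂ)))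
      + (∑ k : Fin N, (ab.2 k : ℂ) * (-(Complex.I * ((k.val : ℂ) + 1) * (x : ℂ))))
      + (-(Complex.I * (L : ℂ) * (x : ℂ)))
      = Complex.I * ((tpFreq N ab - L : ℤ) : ℂ) * (x : ℂ) := by
    have e1 : (∑ k : Fin N, (ab.1 k : ℂ) * (Complex.I * ((k.val : ℂ) + 1) * (x : ℂ)))
        = (∑ k : Fin N, ((k.val : ℂ) + 1) * (ab.1 k : ℂ)) * (Complex.I * (x : ℂ)) := by
      rw [Finset.sum_mul]
      exact Finset.sum_congr rfl fun k _ => by ring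
    have e2 : (∑ k : Fin N, (ab.2 k : ℂ) * (-(Complex.I * ((k.val : ℂ) + 1) * (x : ℂ))))
        = (∑ k : Fin N, ((k.val : ℂ) + 1) * (ab.2 k : ℂ)) * (-(Complex.I * (x : ℂ))) := by
      rw [Finset.sum_mul]
      exact Finset.sum_congr rfl fun k _ => by ring
    have e3 : ((tpFreq N ab - L : ℤ) : ℂ)
        = (∑ k : Fin N, ((k.val : ℂ) + 1) * (ab.1 k : ℂ))
          - (∑ k : Fin N, ((k.val : ℂ) + 1) * (ab.2 k : ℂ)) - (L : ℂ) := by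
      rw [tpFreq]
      push_cast
      ring
    rw [e1, e2, e3]
    ring
  rw [← harg, Complex.exp_add, Complex.exp_add]
  ring

/-- Summability of the coefficients in norm. -/
lemma tp_summable_coeff (N : ℕ) (p q : Fin N → ℂ) :
    Summable fun ab : (Fin N → ℕ) × (Fin N → ℕ) => ‖tpCoeff N p q ab‖ := by
  obtain ⟨_, hPn⟩ := auxExpProd p
  obtain ⟨_, hQn⟩ := auxExpProd q
  have h := hPn.mul_norm hQn
  simpa only [tpCoeff] using h

lemma tp_norm_const (N : ℕ) (p q : Fin N → ℂ) (L : ℤ)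
    (ab : (Fin N → ℕ) × (Fin N → ℕ)) (x : ℝ) :
    ‖tpF N p q L ab x‖ = ‖tpCoeff N p q ab‖ := by
  rw [tpF, norm_mul]
  have h0 : (Complex.I * ((tpFreq N ab - L : ℤ) : ℂ) * (x : ℂ)).re = 0 := by
    simp [Complex.mul_re, Complex.mul_im]
  have h1 : ‖Complex.exp (Complex.I * ((tpFreq N ab - L : ℤ) : ℂ) * (x : ℂ))‖ = 1 := by
    rw [Complex.norm_exp, h0, Real.exp_zero]
  rw [h1, mul_one]

/-- Evaluation of each individual Fourier integral. -/
lemma tp_integral (N : ℕ) (p q : Fin N → ℂ) (L : ℤ)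
    (ab : (Fin N → ℕ) × (Fin N → ℕ)) :
    (1 / (2 * (Real.pi : ℂ))) * ∫ x in (0:ℝ)..(2 * Real.pi), tpF N p q L ab x
      = if tpFreq N ab = L then tpCoeff N p q ab else 0 := by
  have hπ : ((Real.pi : ℂ)) ≠ 0 := by
    simp [Real.pi_ne_zero, Complex.ofReal_ne_zero]
  simp only [tpF]
  rw [intervalIntegral.integral_const_mul]
  by_cases hr : tpFreq N ab - L = 0
  · rw [if_pos (sub_eq_zero.mp hr), hr]
    simp only [Int.cast_zero, mul_zero, zero_mul, Complex.exp_zero,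
      intervalIntegral.integral_const, sub_zero, smul_eq_mul, mul_one]
    rw [Complex.real_smul]
    push_cast
    field_simp
  · rw [if_neg (fun h => hr (sub_eq_zero.mpr h))]
    have hc0 : Complex.I * ((tpFreq N ab - L : ℤ) : ℂ) ≠ 0 :=
      mul_ne_zero Complex.I_ne_zero (Int.cast_ne_zero.mpr hr)
    rw [integral_exp_mul_complex hc0]
    have h1 : Complex.exp (Complex.I * ((tpFreq N ab - L : ℤ) : ℂ) * ((2 * Real.pi : ℝ) : ℂ))
        = 1 := by
      rw [show Complex.I * ((tpFreq N ab - L : ℤ) : ℂ) * ((2 * Real.pi : ℝ) : ℂ)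
          = ((tpFreq N ab - L : ℤ) : ℂ) * (2 * (Real.pi : ℂ) * Complex.I) by push_cast; ring]
      exact Complex.exp_int_mul_two_pi_mul_I (tpFreq N ab - L)
    rw [h1]
    simp

/-- The `L`-th Fourier coefficient of `exp(u(x))` is the (convergent) sum over all pairs of
multi-indices `(a, b)` with `∑ k·a_k - ∑ k·b_k = L` of `∏ p_k^{a_k}/a_k! · ∏ q_k^{b_k}/b_k!`. -/
theorem fourierCoeff_exp_trigPoly (N : ℕ) (p q : Fin N → ℂ) (L : ℤ) :
    HasSum
      (fun ab : (Fin N → ℕ) × (Fin N → ℕ) =>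
        if (∑ k : Fin N, ((k.val : ℤ) + 1) * (ab.1 k : ℤ)) -
              (∑ k : Fin N, ((k.val : ℤ) + 1) * (ab.2 k : ℤ)) = L then
          (∏ k : Fin N, p k ^ ab.1 k / (Nat.factorial (ab.1 k) : ℂ)) *
            (∏ k : Fin N, q k ^ ab.2 k / (Nat.factorial (ab.2 k) : ℂ))
        else 0)
      ((1 / (2 * (Real.pi : ℂ))) *
        ∫ x in (0 : ℝ)..(2 * Real.pi),
          Complex.exp (trigPoly N p q x) *
            Complex.exp (-(Complex.I * (L : ℂ) * (x : ℂ)))) := by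
  classical
  have h2π : (0 : ℝ) ≤ 2 * Real.pi := by positivity
  have hint : ∀ ab : (Fin N → ℕ) × (Fin N → ℕ),
      IntegrableOn (tpF N p q L ab) (Set.Ioc 0 (2 * Real.pi)) := by
    intro ab
    apply Continuous.integrableOn_Ioc
    exact continuous_const.mul ((continuous_const.mul Complex.continuous_ofReal).cexp)
  have hnormint : ∀ ab : (Fin N → ℕ) × (Fin N → ℕ),
      (∫ x in Set.Ioc (0:ℝ) (2 * Real.pi), ‖tpF N p q L ab x‖)
        = 2 * Real.pi * ‖tpCoeff N p q ab‖ := by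
    intro ab
    simp only [tp_norm_const]
    rw [setIntegral_const, Real.volume_real_Ioc_of_le h2π, sub_zero, smul_eq_mul]
  have hsumint : Summable fun ab : (Fin N → ℕ) × (Fin N → ℕ) =>
      ∫ x in Set.Ioc (0:ℝ) (2 * Real.pi), ‖tpF N p q L ab x‖ :=
    (((tp_summable_coeff N p q).mul_left (2 * Real.pi)).congr fun ab => (hnormint ab).symm)
  have H := hasSum_integral_of_summable_integral_norm
    (μ := volume.restrict (Set.Ioc (0:ℝ) (2 * Real.pi))) (F := tpF N p q L) hint hsumint
  have htsum : (∫ x in Set.Ioc (0:ℝ) (2 * Real.pi),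
        ∑' ab : (Fin N → ℕ) × (Fin N → ℕ), tpF N p q L ab x)
      = ∫ x in Set.Ioc (0:ℝ) (2 * Real.pi),
          Complex.exp (trigPoly N p q x) * Complex.exp (-(Complex.I * (L : ℂ) * (x : ℂ))) :=
    integral_congr_ae (Filter.Eventually.of_forall fun x =>
      (tp_hasSum_pointwise N p q L x).tsum_eq)
  rw [htsum] at H
  have H2 := H.mul_left (1 / (2 * (Real.pi : ℂ)))
  rw [show (∫ x in Set.Ioc (0:ℝ) (2 * Real.pi),
        Complex.exp (trigPoly N p q x) * Complex.exp (-(Complex.I * (L : ℂ) * (x : ℂ))))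
      = ∫ x in (0:ℝ)..(2 * Real.pi),
        Complex.exp (trigPoly N p q x) * Complex.exp (-(Complex.I * (L : ℂ) * (x : ℂ)))
      from (intervalIntegral.integral_of_le h2π).symm] at H2
  refine hasSum_congr_fun H2 fun ab => ?_
  rw [show (∫ x in Set.Ioc (0:ℝ) (2 * Real.pi), tpF N p q L ab x)
      = ∫ x in (0:ℝ)..(2 * Real.pi), tpF N p q L ab x
      from (intervalIntegral.integral_of_le h2π).symm]
  rw [tp_integral N p q L ab]
  rfl
end

section
/- Let N be a natural number, t₀ ∈ ℂ, let p⁰, q⁰, p², q² : Fin N → ℂ, let u₀(x) = ∑_{k=1}^{N} (p⁰_k · exp(i k x) + q⁰_k · exp(−i k x)) and u₂(x) = ∑_{k=1}^{N} (p²_k · exp(i k x) + q²_k · exp(−i k x)), and let l ≥ 1 be a natural number. Then (1/(2π)) · ∫₀^{2π} [ (t₀ + u₀(x))²/2 + exp(u₂(x)) · exp(−i l x) ] dx = t₀²/2 + ∑_{k=1}^{N} p⁰_k · q⁰_k + ∑_{(a,b)} ∏_{k=1}^{N} (p²_k)^{a_k}/(a_k!) · ∏_{k=1}^{N} (q²_k)^{b_k}/(b_k!),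 where the last (absolutely convergent) sum runs over all pairs of multi-indices (a, b) : (Fin N → ℕ) × (Fin N → ℕ) with ∑_{k} k·a_k − ∑_{k} k·b_k = l. -/
/-- The multi-index term `∏ p_k^{a_k}/a_k! · ∏ q_k^{b_k}/b_k!` if `∑ k·a_k - ∑ k·b_k = L`,
and `0` otherwise. -/
noncomputable def multiTerm (N : ℕ) (p q : Fin N → ℂ) (L : ℤ)
    (ab : (Fin N → ℕ) × (Fin N → ℕ)) : ℂ :=
  if (∑ k : Fin N, ((k.val : ℤ) + 1) * (ab.1 k : ℤ)) -
        (∑ k : Fin N, ((k.val : ℤ) + 1) * (ab.2 k : ℤ)) = L then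
    (∏ k : Fin N, p k ^ ab.1 k / (Nat.factorial (ab.1 k) : ℂ)) *
      (∏ k : Fin N, q k ^ ab.2 k / (Nat.factorial (ab.2 k) : ℂ))
  else 0

open Complex MeasureTheory

namespace SFTaux

noncomputable def E (m : ℤ) (x : ℝ) : ℂ := Complex.exp (Complex.I * (m : ℂ) * (x : ℝ))

lemma E_mul (m n : ℤ) (x : ℝ) : E m x * E n x = E (m + n) x := by
  rw [E, E, E, ← Complex.exp_add]; congr 1; push_cast; ring

lemma E_cont (m : ℤ) : Continuous (E m) := by unfold E; fun_prop

lemma E_norm (m : ℤ) (x : ℝ) : ‖E m x‖ = 1 := by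
  rw [E, show Complex.I * (m : ℂ) * (x : ℝ) = ((m * x : ℝ) : ℂ) * Complex.I by push_cast; ring]
  exact Complex.norm_exp_ofReal_mul_I _

lemma E_intervalIntegrable (m : ℤ) (a b : ℝ) : IntervalIntegrable (E m) volume a b :=
  (E_cont m).intervalIntegrable a b

lemma intE (m : ℤ) : ∫ x in (0:ℝ)..(2 * Real.pi), E m x = if m = 0 then (2 * Real.pi : ℂ) else 0 := by
  split_ifs with h
  · subst h
    simp [E]
  · have hc : Complex.I * (m : ℂ) ≠ 0 := by
      intro hc
      rcases mul_eq_zero.mp hc with h' | h'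
      · exact Complex.I_ne_zero h'
      · exact h (by exact_mod_cast h')
    have key := integral_exp_mul_complex (a := 0) (b := 2 * Real.pi) hc
    have heq : (∫ x in (0:ℝ)..(2 * Real.pi), E m x)
        = ∫ x in (0:ℝ)..(2 * Real.pi), Complex.exp (Complex.I * (m:ℂ) * (x:ℝ)) := rfl
    rw [heq, key]
    have h1 : Complex.exp (Complex.I * (m:ℂ) * (2 * (Real.pi:ℂ))) = 1 := by
      rw [show Complex.I * (m:ℂ) * (2 * (Real.pi:ℂ)) = (m : ℂ) * (2 * Real.pi * Complex.I) by
        push_cast; ring]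
      exact Complex.exp_int_mul_two_pi_mul_I m
    push_cast
    simp [h1]

lemma exp_eq_tsum (z : ℂ) : Complex.exp z = ∑' n : ℕ, z ^ n / n.factorial := by
  rw [Complex.exp_eq_exp_ℂ, NormedSpace.exp_eq_tsum_div]

lemma norm_summable_pow (z : ℂ) : Summable fun n : ℕ => ‖z ^ n / (n.factorial : ℂ)‖ := by
  have h : (fun n : ℕ => ‖z ^ n / (n.factorial : ℂ)‖) = fun n => ‖z‖ ^ n / n.factorial := by
    funext n
    rw [norm_div, norm_pow]
    simp
  rw [h]
  exact Real.summable_pow_div_factorial ‖z‖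

lemma E_pow (m : ℤ) (n : ℕ) (x : ℝ) : E m x ^ n = E (m * n) x := by
  rw [E, E, ← Complex.exp_nat_mul]; congr 1; push_cast; ring

lemma E_prodsum (N : ℕ) (m : Fin N → ℤ) (x : ℝ) : ∏ k, E (m k) x = E (∑ k, m k) x := by
  simp only [E]
  rw [← Complex.exp_sum]
  congr 1
  push_cast
  rw [Finset.mul_sum, Finset.sum_mul]

lemma pi_tsum_prod : ∀ {N : ℕ} (f : Fin N → ℕ → ℂ), (∀ k, Summable fun n => ‖f k n‖) →
    Summable (fun a : Fin N → ℕ => ‖∏ k, f k (a k)‖) ∧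
    (∑' a : Fin N → ℕ, ∏ k, f k (a k)) = ∏ k, ∑' n, f k n := by
  intro N
  induction N with
  | zero =>
    intro f hf
    constructor
    · exact Summable.of_finite
    · have h1 : (fun a : Fin 0 → ℕ => ∏ k : Fin 0, f k (a k)) = fun _ => (1:ℂ) := by
        funext a; simp
      rw [h1, tsum_const]
      simp
  | succ n ih =>
    intro f hf
    set e := (Fin.consEquiv (fun _ : Fin (n+1) => ℕ)).symm with he
    have hprod : ∀ a : Fin (n+1) → ℕ, ∏ k, f k (a k) = f 0 (a 0) * ∏ k : Fin n, f k.succ (a k.succ) :=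
      fun a => Fin.prod_univ_succ _
    obtain ⟨ihs, ihv⟩ := ih (fun k => f k.succ) (fun k => hf k.succ)
    have hcomp : ∀ z : ℕ × (Fin n → ℕ),
        (∏ k, f k (e.symm z k)) = f 0 z.1 * ∏ k : Fin n, f k.succ (z.2 k) := by
      intro z
      rw [hprod]
      simp [he, Fin.consEquiv]
    have hsum2 : Summable (fun z : ℕ × (Fin n → ℕ) => ‖f 0 z.1 * ∏ k : Fin n, f k.succ (z.2 k)‖) :=
      Summable.mul_norm (f := fun m => f 0 m)
        (g := fun b : Fin n → ℕ => ∏ k : Fin n, f k.succ (b k)) (hf 0) ihs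
    have hsum : Summable (fun a : Fin (n+1) → ℕ => ‖∏ k, f k (a k)‖) := by
      rw [← e.symm.summable_iff]
      have h2 : (fun a : Fin (n+1) → ℕ => ‖∏ k, f k (a k)‖) ∘ e.symm
          = fun z : ℕ × (Fin n → ℕ) => ‖f 0 z.1 * ∏ k : Fin n, f k.succ (z.2 k)‖ := by
        funext z
        simp only [Function.comp_apply, hcomp z]
      rw [h2]
      exact hsum2
    refine ⟨hsum, ?_⟩
    rw [← e.symm.tsum_eq]
    calc ∑' z : ℕ × (Fin n → ℕ), ∏ k, f k (e.symm z k)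
        = ∑' z : ℕ × (Fin n → ℕ), f 0 z.1 * ∏ k : Fin n, f k.succ (z.2 k) := tsum_congr hcomp
      _ = (∑' m, f 0 m) * ∑' b : Fin n → ℕ, ∏ k : Fin n, f k.succ (b k) :=
          (tsum_mul_tsum_of_summable_norm (f := fun m => f 0 m)
            (g := fun b : Fin n → ℕ => ∏ k : Fin n, f k.succ (b k)) (hf 0) ihs).symm
      _ = ∏ k, ∑' m, f k m := by rw [ihv, Fin.prod_univ_succ]


lemma key (N : ℕ) (p : Fin N → ℂ) (m : Fin N → ℤ) (x : ℝ) :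
    Summable (fun a : Fin N → ℕ => ‖∏ k, p k ^ a k / ((a k).factorial : ℂ)‖) ∧
    Complex.exp (∑ k, p k * E (m k) x)
      = ∑' a : Fin N → ℕ,
          (∏ k, p k ^ a k / ((a k).factorial : ℂ)) * E (∑ k, m k * (a k : ℤ)) x := by
  have hsumf : ∀ k, Summable fun n : ℕ => ‖p k ^ n / (n.factorial : ℂ) * E (m k * n) x‖ := by
    intro k
    have h : (fun n : ℕ => ‖p k ^ n / (n.factorial : ℂ) * E (m k * n) x‖)
        = fun n => ‖p k ^ n / (n.factorial : ℂ)‖ := by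
      funext n
      simp only [norm_mul, E_norm, mul_one]
    rw [h]
    exact norm_summable_pow _
  obtain ⟨hs, hv⟩ := pi_tsum_prod (fun k n => p k ^ n / (n.factorial : ℂ) * E (m k * n) x) hsumf
  have hprod : ∀ a : Fin N → ℕ,
      (∏ k, p k ^ a k / ((a k).factorial : ℂ) * E (m k * (a k : ℕ)) x)
      = (∏ k, p k ^ a k / ((a k).factorial : ℂ)) * E (∑ k, m k * (a k : ℤ)) x := by
    intro a
    rw [← E_prodsum N (fun k => m k * (a k : ℤ)) x, ← Finset.prod_mul_distrib]
  constructor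
  · have h : (fun a : Fin N → ℕ => ‖∏ k, p k ^ a k / ((a k).factorial : ℂ)‖)
        = fun a => ‖∏ k, p k ^ a k / ((a k).factorial : ℂ) * E (m k * (a k : ℕ)) x‖ := by
      funext a
      rw [hprod a, norm_mul, E_norm, mul_one]
    rw [h]
    exact hs
  · have h1 : ∀ k : Fin N, (∑' n : ℕ, p k ^ n / (n.factorial : ℂ) * E (m k * n) x)
        = Complex.exp (p k * E (m k) x) := by
      intro k
      rw [exp_eq_tsum]
      apply tsum_congr
      intro n
      rw [mul_pow, ← E_pow]
      ring
    rw [Complex.exp_sum]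
    rw [Finset.prod_congr rfl fun k _ => (h1 k).symm, ← hv]
    exact tsum_congr hprod


noncomputable def cP (N : ℕ) (p : Fin N → ℂ) (a : Fin N → ℕ) : ℂ :=
  ∏ k, p k ^ a k / ((a k).factorial : ℂ)

def S (N : ℕ) (a : Fin N → ℕ) : ℤ := ∑ k, ((k.val : ℤ) + 1) * (a k : ℤ)

lemma cP_norm_summable (N : ℕ) (p : Fin N → ℂ) : Summable fun a => ‖cP N p a‖ :=
  (key N p (fun k => (k.val : ℤ) + 1) 0).1

lemma trigPoly_E (N : ℕ) (p q : Fin N → ℂ) (x : ℝ) :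
    trigPoly N p q x
      = ∑ k : Fin N, (p k * E ((k.val : ℤ) + 1) x + q k * E (-((k.val : ℤ) + 1)) x) := by
  rw [trigPoly]
  apply Finset.sum_congr rfl
  intro k _
  congr 2
  · rw [E]; congr 1; push_cast; ring
  · rw [E]; congr 1; push_cast; ring

lemma keyE (N : ℕ) (p : Fin N → ℂ) (m : Fin N → ℤ) (x : ℝ) :
    Summable (fun a : Fin N → ℕ => ‖cP N p a * E (∑ k, m k * (a k : ℤ)) x‖) := by
  have h : (fun a : Fin N → ℕ => ‖cP N p a * E (∑ k, m k * (a k : ℤ)) x‖)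
      = fun a => ‖cP N p a‖ := by
    funext a
    rw [norm_mul, E_norm, mul_one]
  rw [h]
  exact cP_norm_summable N p

lemma expansion (N : ℕ) (p2 q2 : Fin N → ℂ) (l : ℕ) (x : ℝ) :
    Complex.exp (trigPoly N p2 q2 x) * Complex.exp (-(Complex.I * (l : ℂ) * (x : ℝ)))
      = ∑' ab : (Fin N → ℕ) × (Fin N → ℕ),
          cP N p2 ab.1 * cP N q2 ab.2 * E (S N ab.1 - S N ab.2 - l) x := by
  obtain ⟨hsP, hvP⟩ := key N p2 (fun k => (k.val : ℤ) + 1) x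
  obtain ⟨hsQ, hvQ⟩ := key N q2 (fun k => -((k.val : ℤ) + 1)) x
  have ht : trigPoly N p2 q2 x
      = (∑ k : Fin N, p2 k * E ((k.val : ℤ) + 1) x)
        + ∑ k : Fin N, q2 k * E (-((k.val : ℤ) + 1)) x := by
    rw [trigPoly_E, Finset.sum_add_distrib]
  have hl : Complex.exp (-(Complex.I * (l : ℂ) * (x : ℝ))) = E (-(l : ℤ)) x := by
    rw [E]; congr 1; push_cast; ring
  rw [ht, Complex.exp_add, hvP, hvQ, hl]
  have hsP' := keyE N p2 (fun k => (k.val : ℤ) + 1) x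
  have hsQ' := keyE N q2 (fun k => -((k.val : ℤ) + 1)) x
  simp only [cP] at hsP' hsQ'
  rw [tsum_mul_tsum_of_summable_norm hsP' hsQ', ← tsum_mul_right]
  apply tsum_congr
  intro ab
  have h2 : (∑ k, (-((k.val : ℤ) + 1)) * (ab.2 k : ℤ)) = -(S N ab.2) := by
    rw [S, ← Finset.sum_neg_distrib]
    apply Finset.sum_congr rfl
    intro k _
    ring
  rw [h2, show (∑ k : Fin N, ((k.val : ℤ) + 1) * (ab.1 k : ℤ)) = S N ab.1 from rfl,
    show S N ab.1 - S N ab.2 - (l : ℤ) = S N ab.1 + (-(S N ab.2) + -(l : ℤ)) by ring,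
    ← E_mul, ← E_mul, cP, cP]
  ring

lemma multiTerm_norm_le (N : ℕ) (p2 q2 : Fin N → ℂ) (L : ℤ)
    (ab : (Fin N → ℕ) × (Fin N → ℕ)) :
    ‖multiTerm N p2 q2 L ab‖ ≤ ‖cP N p2 ab.1‖ * ‖cP N q2 ab.2‖ := by
  rw [multiTerm]
  split_ifs with h
  · exact le_of_eq (by rw [cP, cP, norm_mul])
  · rw [norm_zero]
    positivity

lemma ccSummable (N : ℕ) (p2 q2 : Fin N → ℂ) :
    Summable fun ab : (Fin N → ℕ) × (Fin N → ℕ) => ‖cP N p2 ab.1‖ * ‖cP N q2 ab.2‖ :=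
  Summable.mul_of_nonneg (f := fun a : Fin N → ℕ => ‖cP N p2 a‖)
    (g := fun b : Fin N → ℕ => ‖cP N q2 b‖)
    (cP_norm_summable N p2) (cP_norm_summable N q2)
    (fun _ => norm_nonneg _) (fun _ => norm_nonneg _)

lemma multiTerm_summable (N : ℕ) (p2 q2 : Fin N → ℂ) (L : ℤ) :
    Summable (multiTerm N p2 q2 L) :=
  Summable.of_norm_bounded (ccSummable N p2 q2) (multiTerm_norm_le N p2 q2 L)


lemma integral_expansion (N : ℕ) (p2 q2 : Fin N → ℂ) (l : ℕ) :
    (∫ x in (0:ℝ)..(2 * Real.pi),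
        Complex.exp (trigPoly N p2 q2 x) * Complex.exp (-(Complex.I * (l : ℂ) * (x : ℝ))))
      = (2 * Real.pi : ℂ) * ∑' ab : (Fin N → ℕ) × (Fin N → ℕ), multiTerm N p2 q2 (l : ℤ) ab := by
  have h0le : (0:ℝ) ≤ 2 * Real.pi := by positivity
  set G : (Fin N → ℕ) × (Fin N → ℕ) → ℝ → ℂ :=
    fun ab y => cP N p2 ab.1 * cP N q2 ab.2 * E (S N ab.1 - S N ab.2 - l) y with hG
  have hGcont : ∀ ab, Continuous (G ab) := fun ab => continuous_const.mul (E_cont _)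
  have hpoint : ∀ x ∈ Set.uIcc (0:ℝ) (2 * Real.pi),
      Complex.exp (trigPoly N p2 q2 x) * Complex.exp (-(Complex.I * (l : ℂ) * (x : ℝ)))
        = ∑' ab, G ab x := fun x _ => expansion N p2 q2 l x
  rw [intervalIntegral.integral_congr hpoint]
  rw [intervalIntegral.integral_of_le h0le]
  set μ := volume.restrict (Set.Ioc (0:ℝ) (2 * Real.pi)) with hμ
  have hInteg : ∀ ab, Integrable (G ab) μ := fun ab => by
    rw [hμ]; exact (hGcont ab).integrableOn_Ioc
  have hnorm : ∀ ab, ∀ y : ℝ, ‖G ab y‖ = ‖cP N p2 ab.1 * cP N q2 ab.2‖ := by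
    intro ab y
    rw [hG]
    simp only
    rw [norm_mul, E_norm, mul_one]
  have hμuniv : (μ Set.univ).toReal = 2 * Real.pi := by
    rw [hμ, MeasureTheory.Measure.restrict_apply_univ, Real.volume_Ioc,
      ENNReal.toReal_ofReal (by linarith [Real.pi_pos])]
    ring
  have hintnorm : ∀ ab, (∫ y, ‖G ab y‖ ∂μ) = (2 * Real.pi) * ‖cP N p2 ab.1 * cP N q2 ab.2‖ := by
    intro ab
    simp only [hnorm ab]
    rw [MeasureTheory.integral_const, measureReal_def, hμuniv, smul_eq_mul]
  have hSum : Summable fun ab : (Fin N → ℕ) × (Fin N → ℕ) => ∫ y, ‖G ab y‖ ∂μ := by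
    simp only [hintnorm]
    apply Summable.mul_left
    have h : (fun ab : (Fin N → ℕ) × (Fin N → ℕ) => ‖cP N p2 ab.1 * cP N q2 ab.2‖)
        = fun ab => ‖cP N p2 ab.1‖ * ‖cP N q2 ab.2‖ := funext fun ab => norm_mul _ _
    rw [h]
    exact ccSummable N p2 q2
  rw [← MeasureTheory.integral_tsum_of_summable_integral_norm hInteg hSum]
  rw [← tsum_mul_left]
  apply tsum_congr
  intro ab
  have hback : (∫ y, G ab y ∂μ) = ∫ y in (0:ℝ)..(2 * Real.pi), G ab y := by
    rw [hμ, intervalIntegral.integral_of_le h0le]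
  rw [hback, hG]
  simp only
  rw [intervalIntegral.integral_const_mul, intE, multiTerm]
  rw [show (∑ k : Fin N, ((k.val : ℤ) + 1) * (ab.1 k : ℤ)) = S N ab.1 from rfl,
    show (∑ k : Fin N, ((k.val : ℤ) + 1) * (ab.2 k : ℤ)) = S N ab.2 from rfl]
  by_cases hc : S N ab.1 - S N ab.2 = (l : ℤ)
  · rw [if_pos (by omega), if_pos hc, cP, cP]
    ring
  · rw [if_neg (by omega), if_neg hc, mul_zero, mul_zero]


lemma integral_u_zero (N : ℕ) (p q : Fin N → ℂ) :
    (∫ x in (0:ℝ)..(2 * Real.pi), trigPoly N p q x) = 0 := by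
  simp only [trigPoly_E]
  rw [intervalIntegral.integral_finset_sum (f := fun k x =>
      p k * E ((k.val : ℤ) + 1) x + q k * E (-((k.val : ℤ) + 1)) x) (fun k _ =>
    ((continuous_const.mul (E_cont _)).add (continuous_const.mul (E_cont _))).intervalIntegrable _ _)]
  apply Finset.sum_eq_zero
  intro k _
  rw [intervalIntegral.integral_add (f := fun x => p k * E ((k.val : ℤ) + 1) x)
      (g := fun x => q k * E (-((k.val : ℤ) + 1)) x)
      ((continuous_const.mul (E_cont _)).intervalIntegrable _ _)
      ((continuous_const.mul (E_cont _)).intervalIntegrable _ _),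
    intervalIntegral.integral_const_mul, intervalIntegral.integral_const_mul,
    intE, intE, if_neg (by omega : ¬((k.val : ℤ) + 1 = 0)),
    if_neg (by omega : ¬(-((k.val : ℤ) + 1) = 0))]
  ring

lemma intTT (N : ℕ) (p q : Fin N → ℂ) (k j : Fin N) :
    (∫ x in (0:ℝ)..(2 * Real.pi),
      (p k * E ((k.val : ℤ) + 1) x + q k * E (-((k.val : ℤ) + 1)) x) *
        (p j * E ((j.val : ℤ) + 1) x + q j * E (-((j.val : ℤ) + 1)) x))
      = if j = k then (p k * q k + q k * p k) * (2 * Real.pi : ℂ) else 0 := by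
  have hexp : ∀ x ∈ Set.uIcc (0:ℝ) (2 * Real.pi),
      (p k * E ((k.val : ℤ) + 1) x + q k * E (-((k.val : ℤ) + 1)) x) *
        (p j * E ((j.val : ℤ) + 1) x + q j * E (-((j.val : ℤ) + 1)) x)
      = p k * p j * E (((k.val : ℤ) + 1) + ((j.val : ℤ) + 1)) x
        + (p k * q j * E (((k.val : ℤ) + 1) + -((j.val : ℤ) + 1)) x
        + (q k * p j * E (-((k.val : ℤ) + 1) + ((j.val : ℤ) + 1)) x
        + q k * q j * E (-((k.val : ℤ) + 1) + -((j.val : ℤ) + 1)) x)) := by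
    intro x _
    rw [← E_mul ((k.val : ℤ) + 1) ((j.val : ℤ) + 1) x,
      ← E_mul ((k.val : ℤ) + 1) (-((j.val : ℤ) + 1)) x,
      ← E_mul (-((k.val : ℤ) + 1)) ((j.val : ℤ) + 1) x,
      ← E_mul (-((k.val : ℤ) + 1)) (-((j.val : ℤ) + 1)) x]
    ring
  have ii : ∀ (c : ℂ) (m : ℤ), IntervalIntegrable (fun x => c * E m x) volume 0 (2 * Real.pi) :=
    fun c m => (continuous_const.mul (E_cont _)).intervalIntegrable _ _
  rw [intervalIntegral.integral_congr hexp,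
    intervalIntegral.integral_add (ii _ _) ((ii _ _).add ((ii _ _).add (ii _ _))),
    intervalIntegral.integral_add (ii _ _) ((ii _ _).add (ii _ _)),
    intervalIntegral.integral_add (ii _ _) (ii _ _),
    intervalIntegral.integral_const_mul, intervalIntegral.integral_const_mul,
    intervalIntegral.integral_const_mul, intervalIntegral.integral_const_mul,
    intE, intE, intE, intE,
    if_neg (by omega : ¬(((k.val : ℤ) + 1) + ((j.val : ℤ) + 1) = 0)),
    if_neg (by omega : ¬(-((k.val : ℤ) + 1) + -((j.val : ℤ) + 1) = 0))]
  by_cases h : j = k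
  · subst h
    rw [if_pos (by omega : ((j.val : ℤ) + 1) + -((j.val : ℤ) + 1) = 0),
      if_pos (by omega : -((j.val : ℤ) + 1) + ((j.val : ℤ) + 1) = 0), if_pos rfl]
    ring
  · have hv : j.val ≠ k.val := fun hh => h (Fin.ext hh)
    rw [if_neg (by omega : ¬(((k.val : ℤ) + 1) + -((j.val : ℤ) + 1) = 0)),
      if_neg (by omega : ¬(-((k.val : ℤ) + 1) + ((j.val : ℤ) + 1) = 0)), if_neg h]
    ring

lemma integral_quadratic (N : ℕ) (t₀ : ℂ) (p q : Fin N → ℂ) :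
    (∫ x in (0:ℝ)..(2 * Real.pi), (t₀ + trigPoly N p q x) ^ 2 / 2)
      = (2 * (Real.pi : ℂ)) * (t₀ ^ 2 / 2 + ∑ k : Fin N, p k * q k) := by
  have hu : Continuous (trigPoly N p q) := by unfold trigPoly; fun_prop
  have h1 : IntervalIntegrable (fun _ : ℝ => t₀ ^ 2 / 2) volume 0 (2 * Real.pi) :=
    intervalIntegrable_const
  have h2 : IntervalIntegrable (fun x => t₀ * trigPoly N p q x) volume 0 (2 * Real.pi) :=
    (continuous_const.mul hu).intervalIntegrable _ _
  have h3 : IntervalIntegrable (fun x => (trigPoly N p q x) ^ 2 / 2) volume 0 (2 * Real.pi) :=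
    ((hu.pow 2).div_const 2).intervalIntegrable _ _
  have hsplit : ∀ x ∈ Set.uIcc (0:ℝ) (2 * Real.pi),
      (t₀ + trigPoly N p q x) ^ 2 / 2
        = t₀ ^ 2 / 2 + (t₀ * trigPoly N p q x + (trigPoly N p q x) ^ 2 / 2) := fun x _ => by ring
  rw [intervalIntegral.integral_congr hsplit,
    intervalIntegral.integral_add h1 (h2.add h3),
    intervalIntegral.integral_add h2 h3,
    intervalIntegral.integral_const,
    intervalIntegral.integral_const_mul, integral_u_zero, mul_zero]
  have hsq : ∀ x ∈ Set.uIcc (0:ℝ) (2 * Real.pi),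
      (trigPoly N p q x) ^ 2 / 2
        = (∑ k : Fin N, ∑ j : Fin N,
            ((p k * E ((k.val : ℤ) + 1) x + q k * E (-((k.val : ℤ) + 1)) x) *
              (p j * E ((j.val : ℤ) + 1) x + q j * E (-((j.val : ℤ) + 1)) x))) / 2 := by
    intro x _
    rw [trigPoly_E, sq, Finset.sum_mul_sum]
  rw [intervalIntegral.integral_congr hsq, intervalIntegral.integral_div]
  have hc : ∀ (k : Fin N),
      Continuous (fun x => p k * E ((k.val : ℤ) + 1) x + q k * E (-((k.val : ℤ) + 1)) x) :=
    fun k => (continuous_const.mul (E_cont _)).add (continuous_const.mul (E_cont _))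
  rw [intervalIntegral.integral_finset_sum (f := fun k x => ∑ j : Fin N,
      ((p k * E ((k.val : ℤ) + 1) x + q k * E (-((k.val : ℤ) + 1)) x) *
        (p j * E ((j.val : ℤ) + 1) x + q j * E (-((j.val : ℤ) + 1)) x))) (fun k _ =>
    (continuous_finset_sum _ (fun j _ => (hc k).mul (hc j))).intervalIntegrable _ _)]
  have hinner : ∀ k ∈ (Finset.univ : Finset (Fin N)),
      (∫ x in (0:ℝ)..(2 * Real.pi), ∑ j : Fin N,
        ((p k * E ((k.val : ℤ) + 1) x + q k * E (-((k.val : ℤ) + 1)) x) *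
          (p j * E ((j.val : ℤ) + 1) x + q j * E (-((j.val : ℤ) + 1)) x)))
      = if k ∈ (Finset.univ : Finset (Fin N))
          then (p k * q k + q k * p k) * (2 * Real.pi : ℂ) else 0 := by
    intro k _
    rw [intervalIntegral.integral_finset_sum (f := fun j x =>
        ((p k * E ((k.val : ℤ) + 1) x + q k * E (-((k.val : ℤ) + 1)) x) *
          (p j * E ((j.val : ℤ) + 1) x + q j * E (-((j.val : ℤ) + 1)) x))) (fun j _ => ((hc k).mul (hc j)).intervalIntegrable _ _),
      Finset.sum_congr rfl (fun j _ => intTT N p q k j), Finset.sum_ite_eq' Finset.univ k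
        (fun _ => (p k * q k + q k * p k) * (2 * Real.pi : ℂ))]
  rw [Finset.sum_congr rfl hinner]
  simp only [Finset.mem_univ, if_true]
  have hsum2 : (∑ k : Fin N, (p k * q k + q k * p k) * (2 * Real.pi : ℂ))
      = (2 * ∑ k : Fin N, p k * q k) * (2 * Real.pi : ℂ) := by
    rw [← Finset.sum_mul]
    congr 1
    rw [Finset.mul_sum]
    apply Finset.sum_congr rfl
    intro k _
    ring
  rw [hsum2, sub_zero, Complex.real_smul]
  push_cast
  ring

end SFTaux

/-- The integral computation behind the rational SFT Hamiltonian of `S³` and of the Lens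
spaces `L(l,1)` (prequantizations of `S²`):
`(1/2π)∫₀^{2π}[(t₀+u₀)²/2 + e^{u₂} e^{-ilx}]dx = t₀²/2 + ∑ p⁰_k q⁰_k + (multi-index sum)`. -/
theorem prequantization_sphere_hamiltonian (N : ℕ) (t₀ : ℂ) (p0 q0 p2 q2 : Fin N → ℂ)
    (l : ℕ) (hl : 1 ≤ l) :
    Summable (multiTerm N p2 q2 (l : ℤ)) ∧
      (1 / (2 * (Real.pi : ℂ))) *
          ∫ x in (0 : ℝ)..(2 * Real.pi),
            ((t₀ + trigPoly N p0 q0 x) ^ 2 / 2 +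
              Complex.exp (trigPoly N p2 q2 x) *
                Complex.exp (-(Complex.I * (l : ℂ) * (x : ℂ)))) =
        t₀ ^ 2 / 2 + (∑ k : Fin N, p0 k * q0 k) +
          ∑' ab : (Fin N → ℕ) × (Fin N → ℕ), multiTerm N p2 q2 (l : ℤ) ab := by
  constructor
  · exact SFTaux.multiTerm_summable N p2 q2 (l : ℤ)
  · have hu2 : Continuous (trigPoly N p2 q2) := by unfold trigPoly; fun_prop
    have hu0 : Continuous (trigPoly N p0 q0) := by unfold trigPoly; fun_prop
    have hA : IntervalIntegrable (fun x => (t₀ + trigPoly N p0 q0 x) ^ 2 / 2)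
        MeasureTheory.volume 0 (2 * Real.pi) :=
      (((continuous_const.add hu0).pow 2).div_const 2).intervalIntegrable _ _
    have hB : IntervalIntegrable (fun x : ℝ => Complex.exp (trigPoly N p2 q2 x) *
        Complex.exp (-(Complex.I * (l : ℂ) * (x : ℝ)))) MeasureTheory.volume 0 (2 * Real.pi) := by
      apply Continuous.intervalIntegrable
      exact (Complex.continuous_exp.comp hu2).mul (Complex.continuous_exp.comp (by fun_prop))
    rw [intervalIntegral.integral_add hA hB, SFTaux.integral_quadratic,
      SFTaux.integral_expansion]
    have hπ : (Real.pi : ℂ) ≠ 0 := by exact_mod_cast Real.pi_ne_zero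
    field_simp
end

section
/- Let f : ℝ × ℝ × ℝ → ℝ be a continuously differentiable function of the variables (t₀, t₂, p) satisfying the linear first-order PDE ∂f/∂t₂(t₀, t₂, p) = t₀²/2 + p · ∂f/∂p(t₀, t₂, p) for all (t₀, t₂, p), together with the initial condition f(t₀, 0, p) = p for all t₀, p. Then f(t₀, t₂, p) = t₂·t₀²/2 + e^{t₂}·p for all (t₀, t₂, p). -/
private lemma partial_t2 (f : ℝ × ℝ × ℝ → ℝ) (hf : Differentiable ℝ f) (a b c : ℝ) :
    deriv (fun s => f (a, s, c)) b = fderiv ℝ f (a, b, c) (0, 1, 0) := by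
  have h : HasDerivAt (fun s : ℝ => ((a, s, c) : ℝ × ℝ × ℝ)) ((0 : ℝ), (1 : ℝ), (0 : ℝ)) b :=
    HasDerivAt.prodMk (hasDerivAt_const b a) (HasDerivAt.prodMk (hasDerivAt_id b) (hasDerivAt_const b c))
  exact ((hf (a, b, c)).hasFDerivAt.comp_hasDerivAt b h).deriv

private lemma partial_p (f : ℝ × ℝ × ℝ → ℝ) (hf : Differentiable ℝ f) (a b c : ℝ) :
    deriv (fun s => f (a, b, s)) c = fderiv ℝ f (a, b, c) (0, 0, 1) := by
  have h : HasDerivAt (fun s : ℝ => ((a, b, s) : ℝ × ℝ × ℝ)) ((0 : ℝ), (0 : ℝ), (1 : ℝ)) c :=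
    HasDerivAt.prodMk (hasDerivAt_const c a) (HasDerivAt.prodMk (hasDerivAt_const c b) (hasDerivAt_id c))
  exact ((hf (a, b, c)).hasFDerivAt.comp_hasDerivAt c h).deriv

/-- Uniqueness for the `n = 1` case of the ℂPⁿ recursion: a `C¹` function `f(t₀, t₂, p)`
satisfying `∂f/∂t₂ = t₀²/2 + p ∂f/∂p` with initial condition `f(t₀, 0, p) = p` is
`f(t₀, t₂, p) = t₂ t₀²/2 + e^{t₂} p`. -/
theorem gw_potential_of_C_pde (f : ℝ × ℝ × ℝ → ℝ)
    (hf : ContDiff ℝ 1 f)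
    (hpde : ∀ t₀ t₂ p : ℝ,
      deriv (fun s => f (t₀, s, p)) t₂ =
        t₀ ^ 2 / 2 + p * deriv (fun s => f (t₀, t₂, s)) p)
    (hinit : ∀ t₀ p : ℝ, f (t₀, 0, p) = p) :
    ∀ t₀ t₂ p : ℝ, f (t₀, t₂, p) = t₂ * t₀ ^ 2 / 2 + Real.exp t₂ * p := by
  intro t₀ t₂ p
  have hdf : Differentiable ℝ f := hf.differentiable one_ne_zero
  set p₀ := p * Real.exp t₂ with hp₀
  set g : ℝ → ℝ := fun s => f (t₀, s, p₀ * Real.exp (-s)) with hg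
  -- key fderiv identity from the PDE
  have hfd : ∀ b q : ℝ, fderiv ℝ f (t₀, b, q) (0, 1, 0)
      = t₀ ^ 2 / 2 + q * fderiv ℝ f (t₀, b, q) (0, 0, 1) := by
    intro b q
    have := hpde t₀ b q
    rwa [partial_t2 f hdf, partial_p f hdf] at this
  have key : ∀ s : ℝ, HasDerivAt g (t₀ ^ 2 / 2) s := by
    intro s
    have hexp : HasDerivAt (fun s : ℝ => p₀ * Real.exp (-s))
        (-(p₀ * Real.exp (-s))) s := by
      have h1 : HasDerivAt (fun s : ℝ => Real.exp (-s)) (Real.exp (-s) * (-1)) s :=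
        ((hasDerivAt_id s).neg).exp
      have := h1.const_mul p₀
      refine this.congr_deriv ?_
      ring
    have hc : HasDerivAt (fun s : ℝ => ((t₀, s, p₀ * Real.exp (-s)) : ℝ × ℝ × ℝ))
        ((0 : ℝ), (1 : ℝ), -(p₀ * Real.exp (-s))) s :=
      HasDerivAt.prodMk (hasDerivAt_const s t₀) (HasDerivAt.prodMk (hasDerivAt_id s) hexp)
    have hF := (hdf (t₀, s, p₀ * Real.exp (-s))).hasFDerivAt
    have hcomp := hF.comp_hasDerivAt s hc
    have hval : fderiv ℝ f (t₀, s, p₀ * Real.exp (-s))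
        ((0 : ℝ), (1 : ℝ), -(p₀ * Real.exp (-s))) = t₀ ^ 2 / 2 := by
      set q := p₀ * Real.exp (-s) with hq
      have hsplit : ((0 : ℝ), (1 : ℝ), -q)
          = ((0 : ℝ), (1 : ℝ), (0 : ℝ)) + (-q) • ((0 : ℝ), (0 : ℝ), (1 : ℝ)) := by
        simp [Prod.ext_iff]
      rw [hsplit, map_add, map_smul, hfd s q]
      simp only [smul_eq_mul]
      ring
    rwa [hval] at hcomp
  -- integrate: g is affine
  have hglin : ∀ x : ℝ, g x = g 0 + x * (t₀ ^ 2 / 2) := by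
    intro x
    set h : ℝ → ℝ := fun s => g s - s * (t₀ ^ 2 / 2) with hh
    have hconst : ∀ x y : ℝ, h x = h y := by
      apply is_const_of_deriv_eq_zero
      · intro s
        exact ((key s).sub ((hasDerivAt_id s).mul_const _)).differentiableAt
      · intro s
        have : HasDerivAt h (t₀ ^ 2 / 2 - 1 * (t₀ ^ 2 / 2)) s :=
          (key s).sub ((hasDerivAt_id s).mul_const _)
        simpa using this.deriv
    have := hconst x 0
    simp only [hh] at this
    linarith
  have hgt₂ : g t₂ = f (t₀, t₂, p) := by
    simp only [hg, hp₀]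
    congr 2
    rw [mul_assoc, ← Real.exp_add]
    simp
  have hg0 : g 0 = p₀ := by
    simp [hg, hinit]
  have := hglin t₂
  rw [hgt₂, hg0, hp₀] at this
  rw [this]; ring
end
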